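/- Let 𝔡_OBC be the Lie algebra over ℝ generated by the set {i·Z_j : 1 ≤ j ≤ L} ∪ {i·X_j·X_{j+1} : 1 ≤ j ≤ L−1} inside the 2^L × 2^L complex matrices. Then 𝔡_OBC equals the real linear span of the set {i·Z_j : 1 ≤ j ≤ L} ∪ {i·T^{AB}_{j,k} : 1 ≤ j < k ≤ L, A, B ∈ {X, Y}}, and 𝔡_OBC has dimension L·(2L−1) as a real vector space. -/

import Mathlib

open Matrix

noncomputable section

/-- The Pauli matrix X. -/
def PX : Matrix (Fin 2) (Fin 2) ℂ := !![0, 1; 1, 0]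
/-- The Pauli matrix Y. -/
def PY : Matrix (Fin 2) (Fin 2) ℂ := !![0, -Complex.I; Complex.I, 0]
/-- The Pauli matrix Z. -/
def PZ : Matrix (Fin 2) (Fin 2) ℂ := !![1, 0; 0, -1]

/-- The operator `M_j = I₂^{⊗ j} ⊗ M ⊗ I₂^{⊗ (L-1-j)}` acting as `M` on site `j` and as the
identity elsewhere, on `(ℂ²)^{⊗ L} ≅ ℂ^{2^L}` whose standard basis is indexed by functions
`v : Fin L → Fin 2`. -/
def site (L : ℕ) (M : Matrix (Fin 2) (Fin 2) ℂ) (j : Fin L) :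
    Matrix (Fin L → Fin 2) (Fin L → Fin 2) ℂ :=
  fun v w => ∏ k : Fin L, if k = j then M (v k) (w k) else (if v k = w k then 1 else 0)

/-- The Pauli string `T^{AB}_{j,k} = A_j · Z_{j+1} · Z_{j+2} ⋯ Z_{k-1} · B_k`. -/
def pauliString (L : ℕ) (A B : Matrix (Fin 2) (Fin 2) ℂ) (j k : Fin L) :
    Matrix (Fin L → Fin 2) (Fin L → Fin 2) ℂ :=
  site L A j *
    (((List.finRange L).filter (fun m => j < m ∧ m < k)).map (site L PZ)).prod *
    site L B k

/-- The parity operator `P = Z_1 · Z_2 ⋯ Z_L`. -/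
def parity (L : ℕ) : Matrix (Fin L → Fin 2) (Fin L → Fin 2) ℂ :=
  ((List.finRange L).map (site L PZ)).prod

/-- The generators of the site-dependent protocol with open boundary conditions:
`{i·Z_j : 1 ≤ j ≤ L} ∪ {i·X_j·X_{j+1} : 1 ≤ j ≤ L-1}`. -/
def depGenOBC (L : ℕ) : Set (Matrix (Fin L → Fin 2) (Fin L → Fin 2) ℂ) :=
  {M | ∃ j : Fin L, M = Complex.I • site L PZ j} ∪
  {M | ∃ (j : ℕ) (h : j + 1 < L),
    M = Complex.I • (site L PX ⟨j, by omega⟩ * site L PX ⟨j + 1, h⟩)}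

/-- The claimed basis `{i·Z_j : 1 ≤ j ≤ L} ∪ {i·T^{AB}_{j,k} : 1 ≤ j < k ≤ L, A, B ∈ {X,Y}}`. -/
def depBasis (L : ℕ) : Set (Matrix (Fin L → Fin 2) (Fin L → Fin 2) ℂ) :=
  {M | ∃ j : Fin L, M = Complex.I • site L PZ j} ∪
  {M | ∃ (j k : Fin L) (A B : Matrix (Fin 2) (Fin 2) ℂ),
    j < k ∧ A ∈ ({PX, PY} : Set (Matrix (Fin 2) (Fin 2) ℂ)) ∧
    B ∈ ({PX, PY} : Set (Matrix (Fin 2) (Fin 2) ℂ)) ∧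
    M = Complex.I • pauliString L A B j k}

attribute [local instance 100] LieRing.ofAssociativeRing

namespace DepOBC


def eps : Fin 4 → Fin 2 := ![0, 1, 1, 0]
def pmul : Fin 4 → Fin 4 → Fin 4 := ![![0,1,2,3],![1,0,3,2],![2,3,0,1],![3,2,1,0]]
def coef (a : Fin 4) (v : Fin 2) : ℂ :=
  if a.val = 2 then (if v.val = 0 then -Complex.I else Complex.I)
  else if a.val = 3 then (if v.val = 0 then 1 else -1) else 1
def pphase (a b : Fin 4) : ℂ :=
  if (a.val=1∧b.val=2)∨(a.val=2∧b.val=3)∨(a.val=3∧b.val=1) then Complex.I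
  else if (a.val=2∧b.val=1)∨(a.val=3∧b.val=2)∨(a.val=1∧b.val=3) then -Complex.I else 1

lemma coef_mul (a b : Fin 4) (v : Fin 2) :
    coef a v * coef b (v + eps a) = pphase a b * coef (pmul a b) v := by
  fin_cases a <;> fin_cases b <;> fin_cases v <;>
    norm_num [coef, eps, pmul, pphase, show ((3:Fin 4):ℕ) = 3 from rfl, show ((2:Fin 2):ℕ) = 0 from rfl,
      show ((1:Fin 2) + 1) = 0 from rfl]

lemma eps_pmul : ∀ a b : Fin 4, eps (pmul a b) = eps a + eps b := by decide
lemma pmul_comm : ∀ a b : Fin 4, pmul a b = pmul b a := by decide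
lemma pmul_zero : ∀ a : Fin 4, pmul a 0 = a := by decide
lemma zero_pmul : ∀ a : Fin 4, pmul 0 a = a := by decide
lemma pmul_self : ∀ a : Fin 4, pmul a a = 0 := by decide
lemma pphase_zero (a : Fin 4) : pphase a 0 = 1 := by
  fin_cases a <;> norm_num [pphase]
lemma zero_pphase (a : Fin 4) : pphase 0 a = 1 := by
  fin_cases a <;> norm_num [pphase]
lemma pphase_self (a : Fin 4) : pphase a a = 1 := by
  fin_cases a <;> norm_num [pphase]
lemma pphase_ne_zero (a b : Fin 4) : pphase a b ≠ 0 := by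
  fin_cases a <;> fin_cases b <;> norm_num [pphase, Complex.I_ne_zero]

variable (L : ℕ)

def W (f : Fin L → Fin 4) : Matrix (Fin L → Fin 2) (Fin L → Fin 2) ℂ :=
  fun v w => if w = fun k => v k + eps (f k) then ∏ k, coef (f k) (v k) else 0

lemma W_mul (f g : Fin L → Fin 4) :
    W L f * W L g = (∏ k, pphase (f k) (g k)) • W L (fun k => pmul (f k) (g k)) := by
  ext v w
  rw [Matrix.mul_apply]
  rw [Finset.sum_eq_single (fun k => v k + eps (f k))]
  · simp only [W, Matrix.smul_apply, smul_eq_mul, eq_self_iff_true, if_true]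
    have hc : (w = fun k => (v k + eps (f k)) + eps (g k)) ↔
        (w = fun k => v k + eps (pmul (f k) (g k))) := by
      constructor <;> intro h <;> (subst h; funext k; rw [eps_pmul, add_assoc])
    by_cases h : w = fun k => v k + eps (pmul (f k) (g k))
    · rw [if_pos (hc.mpr h), if_pos h, ← Finset.prod_mul_distrib, ← Finset.prod_mul_distrib]
      exact Finset.prod_congr rfl fun k _ => coef_mul _ _ _
    · rw [if_neg (fun hh => h (hc.mp hh)), mul_zero, if_neg h, mul_zero]
  · intro u _ hu
    simp only [W, if_neg hu, zero_mul]
  · simp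


def pm : Fin 4 → Matrix (Fin 2) (Fin 2) ℂ := ![(1 : Matrix (Fin 2) (Fin 2) ℂ), PX, PY, PZ]

lemma pm_apply (a : Fin 4) (x y : Fin 2) : pm a x y = if y = x + eps a then coef a x else 0 := by
  fin_cases a <;> fin_cases x <;> fin_cases y <;>
    norm_num [pm, PX, PY, PZ, eps, coef, Matrix.one_apply,
      show ((2:Fin 2):ℕ) = 0 from rfl, Fin.ext_iff, show ((1:Fin 2) + 1) = 0 from rfl]

def single (j : Fin L) (a : Fin 4) : Fin L → Fin 4 := fun m => if m = j then a else 0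

lemma prod_if_eq (t w : Fin L → Fin 2) (c : Fin L → ℂ) :
    (∏ k, if w k = t k then c k else 0) = if w = t then ∏ k, c k else 0 := by
  by_cases h : w = t
  · subst h; simp
  · rw [if_neg h]
    obtain ⟨k0, hk0⟩ := Function.ne_iff.mp h
    exact Finset.prod_eq_zero (Finset.mem_univ k0) (if_neg hk0)

lemma site_eq_W (a : Fin 4) (j : Fin L) : site L (pm a) j = W L (single L j a) := by
  ext v w
  show (∏ k : Fin L, if k = j then pm a (v k) (w k) else (if v k = w k then 1 else 0)) = _
  have : ∀ k : Fin L, (if k = j then pm a (v k) (w k) else (if v k = w k then 1 else 0))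
      = if w k = v k + eps (single L j a k) then coef (single L j a k) (v k) else 0 := by
    intro k
    by_cases hk : k = j
    · subst hk; simp [single, pm_apply]
    · simp only [single, if_neg hk]
      have : v k + eps 0 = v k := by show v k + 0 = v k; exact add_zero _
      rw [this]
      have : coef 0 (v k) = 1 := rfl
      rw [this]
      simp [eq_comm]
  rw [Finset.prod_congr rfl (fun k _ => this k)]
  rw [prod_if_eq]
  rfl

lemma W_one : W L (fun _ => 0) = 1 := by
  ext v w
  have h1 : (fun k : Fin L => v k + eps 0) = v := by funext k; show v k + 0 = v k; exact add_zero _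
  have h2 : ∀ k : Fin L, coef 0 (v k) = 1 := fun k => rfl
  simp only [W, h1, Matrix.one_apply]
  rw [Finset.prod_congr rfl (fun k _ => h2 k), Finset.prod_const_one]
  simp [eq_comm]


lemma W_mul_one (f g : Fin L → Fin 4) (h : ∀ m, pphase (f m) (g m) = 1) :
    W L f * W L g = W L (fun m => pmul (f m) (g m)) := by
  rw [W_mul, Finset.prod_eq_one (fun m _ => h m), one_smul]

lemma pm_three : pm 3 = PZ := rfl
lemma pm_one : pm 1 = PX := rfl
lemma pm_two : pm 2 = PY := rfl

lemma list_prod_W (l : List (Fin L)) (hl : l.Nodup) :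
    (l.map (site L PZ)).prod = W L (fun m => if m ∈ l then 3 else 0) := by
  induction l with
  | nil => simpa using (W_one L).symm
  | cons a l ih =>
    have hnd := List.nodup_cons.mp hl
    rw [List.map_cons, List.prod_cons, ih hnd.2, ← pm_three, site_eq_W, W_mul_one]
    · refine congrArg (W L) (funext fun m => ?_)
      by_cases hm : m = a
      · simp [single, hm, hnd.1, pmul_zero]
      · simp [single, hm, zero_pmul]
    · intro m
      by_cases hm : m = a
      · simp [single, hm, hnd.1, pphase_zero]
      · simp [single, hm, zero_pphase]

def sw (j k : Fin L) (a b : Fin 4) : Fin L → Fin 4 :=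
  fun m => if m = j then a else if m = k then b else if j < m ∧ m < k then 3 else 0

lemma pauliString_eq_W (a b : Fin 4) (j k : Fin L) (hjk : j < k) :
    pauliString L (pm a) (pm b) j k = W L (sw L j k a b) := by
  have hjk' : j ≠ k := ne_of_lt hjk
  have hjj : ¬(j < j ∧ j < k) := fun h => lt_irrefl _ h.1
  have hkk : ¬(j < k ∧ k < k) := fun h => lt_irrefl _ h.2
  unfold pauliString
  rw [site_eq_W, site_eq_W,
    list_prod_W L _ ((List.nodup_finRange L).filter _)]
  have hmem : ∀ m : Fin L, (m ∈ (List.finRange L).filter (fun m => j < m ∧ m < k)) ↔ (j < m ∧ m < k) := by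
    intro m; simp [List.mem_filter]
  have e1 : W L (single L j a) * W L (fun m => if m ∈ (List.finRange L).filter (fun m => j < m ∧ m < k) then 3 else 0)
      = W L (fun m => if m = j then a else if j < m ∧ m < k then 3 else 0) := by
    rw [W_mul_one]
    · refine congrArg (W L) (funext fun m => ?_)
      by_cases hm : m = j
      · simp [single, hm, hmem, hjj, pmul_zero]
      · by_cases h2 : j < m ∧ m < k <;> simp [single, hm, hmem, h2, zero_pmul]
    · intro m
      by_cases hm : m = j
      · simp [single, hm, hmem, hjj, pphase_zero]
      · simp [single, hm, zero_pphase]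
  rw [e1, W_mul_one]
  · refine congrArg (W L) (funext fun m => ?_)
    by_cases hmk : m = k
    · simp [single, sw, hmk, Ne.symm hjk', hkk, zero_pmul]
    · simp only [single, if_neg hmk, pmul_zero, sw]
  · intro m
    by_cases hmk : m = k
    · simp [single, hmk, Ne.symm hjk', hkk, zero_pphase]
    · simp [single, hmk, pphase_zero]

def letter (s : Fin 2) : Fin 4 := if s = 0 then 1 else 2
def mw (p : Fin L × Fin 2) : Fin L → Fin 4 :=
  fun m => if m < p.1 then 3 else if m = p.1 then letter p.2 else 0
def γm (p : Fin L × Fin 2) : Matrix (Fin L → Fin 2) (Fin L → Fin 2) ℂ := W L (mw L p)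

lemma letter_ne_zero : ∀ s : Fin 2, letter s ≠ 0 := by decide
lemma letter_ne_three : ∀ s : Fin 2, letter s ≠ 3 := by decide
lemma letter_inj : ∀ s t : Fin 2, letter s = letter t ↔ s = t := by decide

lemma pphase_swap (a b : Fin 4) :
    pphase a b = (if a ≠ b ∧ a ≠ 0 ∧ b ≠ 0 then -1 else 1) * pphase b a := by
  fin_cases a <;> fin_cases b <;> norm_num [pphase, Fin.ext_iff]

lemma gamma_sq (p : Fin L × Fin 2) : γm L p * γm L p = 1 := by
  rw [γm, W_mul_one L _ _ (fun m => pphase_self _)]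
  have : (fun m => pmul (mw L p m) (mw L p m)) = fun _ => (0 : Fin 4) :=
    funext fun m => pmul_self _
  rw [this, W_one]

lemma gamma_anticomm (p q : Fin L × Fin 2) (h : p ≠ q) :
    γm L p * γm L q = -(γm L q * γm L p) := by
  rw [γm, γm, W_mul, W_mul]
  have hw : (fun m => pmul (mw L q m) (mw L p m)) = (fun m => pmul (mw L p m) (mw L q m)) :=
    funext fun m => pmul_comm _ _
  rw [hw, ← neg_smul]
  congr 1
  have key : ∀ m : Fin L, pphase (mw L p m) (mw L q m) =
      (if m = min p.1 q.1 then (-1 : ℂ) else 1) * pphase (mw L q m) (mw L p m) := by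
    intro m
    rw [pphase_swap (mw L p m) (mw L q m)]
    congr 1
    refine if_congr ?_ rfl rfl
    obtain ⟨j, s⟩ := p
    obtain ⟨k, t⟩ := q
    rcases lt_trichotomy j k with hjk | hjk | hjk
    · have hmin : min j k = j := min_eq_left hjk.le
      rcases lt_trichotomy m j with hm | hm | hm
      · have : m ≠ j := ne_of_lt hm
        have hmk : m < k := lt_trans hm hjk
        simp [mw, hm, hmk, this, hmin]
      · subst hm
        have h2 : ¬(m < m) := lt_irrefl m
        have h3 : m ≠ k := ne_of_lt hjk
        simp [mw, h2, hjk, hmin, letter_ne_zero, letter_ne_three]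
      · have h2 : ¬(m < j) := not_lt_of_gt hm
        have h3 : m ≠ j := Ne.symm (ne_of_lt hm)
        simp [mw, h2, h3, hmin]
        all_goals exact h3
    · subst hjk
      have hst : s ≠ t := fun hh => h (by rw [hh])
      have hmin : min j j = j := min_self j
      rcases lt_trichotomy m j with hm | hm | hm
      · simp [mw, hm, hmin, ne_of_lt hm]
      · subst hm
        have h2 : ¬(m < m) := lt_irrefl m
        simp [mw, h2, hmin, letter_ne_zero, letter_inj, hst]
      · have h2 : ¬(m < j) := not_lt_of_gt hm
        have h3 : m ≠ j := Ne.symm (ne_of_lt hm)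
        simp [mw, h2, h3, hmin]
        all_goals exact h3
    · have hmin : min j k = k := min_eq_right hjk.le
      rcases lt_trichotomy m k with hm | hm | hm
      · have : m ≠ k := ne_of_lt hm
        have hmj : m < j := lt_trans hm hjk
        simp [mw, hm, hmj, this, hmin]
      · subst hm
        have h2 : ¬(m < m) := lt_irrefl m
        have h3 : m ≠ j := ne_of_lt hjk
        simp [mw, h2, hjk, hmin, letter_ne_zero, letter_ne_three]
        intro hh
        exact (letter_ne_three t hh.symm).elim
      · have h2 : ¬(m < k) := not_lt_of_gt hm
        have h3 : m ≠ k := Ne.symm (ne_of_lt hm)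
        simp [mw, h2, h3, hmin]
        all_goals exact h3
  calc (∏ m, pphase (mw L p m) (mw L q m))
      = ∏ m, ((if m = min p.1 q.1 then (-1:ℂ) else 1) * pphase (mw L q m) (mw L p m)) :=
        Finset.prod_congr rfl fun m _ => key m
    _ = (∏ m, if m = min p.1 q.1 then (-1:ℂ) else 1) * ∏ m, pphase (mw L q m) (mw L p m) :=
        Finset.prod_mul_distrib
    _ = -∏ m, pphase (mw L q m) (mw L p m) := by
        rw [Finset.prod_ite_eq' Finset.univ (min p.1 q.1) (fun _ => (-1 : ℂ))]
        simp

lemma gamma_mul_same (j : Fin L) :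
    γm L (j, 0) * γm L (j, 1) = Complex.I • W L (single L j 3) := by
  rw [γm, γm, W_mul]
  congr 1
  · have key : ∀ m : Fin L, pphase (mw L (j,0) m) (mw L (j,1) m) =
        if m = j then Complex.I else 1 := by
      intro m
      rcases lt_trichotomy m j with hm | hm | hm
      · simp [mw, hm, ne_of_lt hm, pphase_self]
      · subst hm
        norm_num [mw, lt_irrefl, letter, pphase]
      · simp [mw, not_lt_of_gt hm, Ne.symm (ne_of_lt hm), zero_pphase]
    rw [Finset.prod_congr rfl (fun m _ => key m),
      Finset.prod_ite_eq' Finset.univ j (fun _ => Complex.I)]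
    simp
  · refine congrArg (W L) (funext fun m => ?_)
    rcases lt_trichotomy m j with hm | hm | hm
    · simp [mw, single, hm, ne_of_lt hm, pmul_self]
    · subst hm
      norm_num [mw, single, lt_irrefl, letter, pmul]
      rfl
    · simp [mw, single, not_lt_of_gt hm, Ne.symm (ne_of_lt hm), pmul]

lemma gamma_mul_lt (j k : Fin L) (h : j < k) (s t : Fin 2) :
    γm L (j, s) * γm L (k, t) =
      pphase (letter s) 3 • W L (sw L j k (pmul (letter s) 3) (letter t)) := by
  rw [γm, γm, W_mul]
  congr 1
  · have key : ∀ m : Fin L, pphase (mw L (j,s) m) (mw L (k,t) m) =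
        if m = j then pphase (letter s) 3 else 1 := by
      intro m
      rcases lt_trichotomy m j with hm | hm | hm
      · have hmk : m < k := lt_trans hm h
        simp [mw, hm, hmk, ne_of_lt hm, pphase_self]
      · subst hm
        simp [mw, lt_irrefl, h, ne_of_lt h]
      · simp [mw, not_lt_of_gt hm, Ne.symm (ne_of_lt hm), zero_pphase]
    rw [Finset.prod_congr rfl (fun m _ => key m),
      Finset.prod_ite_eq' Finset.univ j (fun _ => pphase (letter s) 3)]
    simp
  · refine congrArg (W L) (funext fun m => ?_)
    rcases lt_trichotomy m j with hm | hm | hm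
    · have hmk : m < k := lt_trans hm h
      have hk : m ≠ k := ne_of_lt hmk
      simp [mw, sw, hm, hmk, ne_of_lt hm, hk, pmul_self, not_lt_of_gt hm]
    · subst hm
      simp [mw, sw, lt_irrefl, h, ne_of_lt h]
    · have hjm : ¬(m < j) := not_lt_of_gt hm
      have hmj : m ≠ j := Ne.symm (ne_of_lt hm)
      rcases lt_trichotomy m k with hm2 | hm2 | hm2
      · simp [mw, sw, hjm, hmj, hm2, ne_of_lt hm2, zero_pmul, hm]
      · subst hm2
        simp [mw, sw, lt_irrefl, hjm, hmj, zero_pmul]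
      · have h2 : ¬(m < k) := not_lt_of_gt hm2
        have h3 : m ≠ k := Ne.symm (ne_of_lt hm2)
        simp [mw, sw, hjm, hmj, h2, h3, zero_pmul, hm, hm2]

lemma mid_cancel (a b c : Fin L × Fin 2) :
    (γm L a * γm L b) * (γm L b * γm L c) = γm L a * γm L c := by
  rw [mul_assoc, ← mul_assoc (γm L b), gamma_sq, one_mul]

lemma swap_pair (a b c : Fin L × Fin 2) (hab : a ≠ b) (hbc : b ≠ c) (hca : c ≠ a) :
    (γm L b * γm L c) * (γm L a * γm L b) = -(γm L a * γm L c) := by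
  calc (γm L b * γm L c) * (γm L a * γm L b)
      = γm L b * ((γm L c * γm L a) * γm L b) := by rw [mul_assoc, mul_assoc]
    _ = γm L b * ((-(γm L a * γm L c)) * γm L b) := by rw [gamma_anticomm L c a hca]
    _ = -(γm L b * ((γm L a * γm L c) * γm L b)) := by rw [neg_mul, mul_neg]
    _ = -(γm L b * (γm L a * (γm L c * γm L b))) := by rw [mul_assoc]
    _ = -(γm L b * (γm L a * (-(γm L b * γm L c)))) := by rw [gamma_anticomm L c b hbc.symm]
    _ = γm L b * (γm L a * (γm L b * γm L c)) := by rw [mul_neg, mul_neg, neg_neg]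
    _ = γm L b * ((γm L a * γm L b) * γm L c) := by rw [mul_assoc]
    _ = γm L b * ((-(γm L b * γm L a)) * γm L c) := by rw [gamma_anticomm L a b hab]
    _ = -(γm L b * (γm L b * (γm L a * γm L c))) := by
        rw [neg_mul, mul_neg, mul_assoc]
    _ = -((γm L b * γm L b) * (γm L a * γm L c)) := by rw [mul_assoc]
    _ = -(γm L a * γm L c) := by rw [gamma_sq, one_mul]

lemma br2 (a b c : Fin L × Fin 2) (hab : a ≠ b) (hbc : b ≠ c) (hca : c ≠ a) :
    ⁅γm L a * γm L b, γm L b * γm L c⁆ = (2 : ℝ) • (γm L a * γm L c) := by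
  rw [Ring.lie_def, mid_cancel, swap_pair L a b c hab hbc hca, sub_neg_eq_add, two_smul]

lemma prod4_disj (p q r s : Fin L × Fin 2) (hpr : p ≠ r) (hps : p ≠ s)
    (hqr : q ≠ r) (hqs : q ≠ s) :
    (γm L p * γm L q) * (γm L r * γm L s) = (γm L r * γm L s) * (γm L p * γm L q) := by
  have hcomm : ∀ x y z : Fin L × Fin 2, x ≠ y → x ≠ z →
      γm L x * (γm L y * γm L z) = (γm L y * γm L z) * γm L x := by
    intro x y z hxy hxz
    calc γm L x * (γm L y * γm L z) = (γm L x * γm L y) * γm L z := by rw [mul_assoc]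
      _ = (-(γm L y * γm L x)) * γm L z := by rw [gamma_anticomm L x y hxy]
      _ = -(γm L y * (γm L x * γm L z)) := by rw [neg_mul, mul_assoc]
      _ = -(γm L y * (-(γm L z * γm L x))) := by rw [gamma_anticomm L x z hxz]
      _ = γm L y * (γm L z * γm L x) := by rw [mul_neg, neg_neg]
      _ = (γm L y * γm L z) * γm L x := by rw [mul_assoc]
  calc (γm L p * γm L q) * (γm L r * γm L s)
      = γm L p * (γm L q * (γm L r * γm L s)) := by rw [mul_assoc]
    _ = γm L p * ((γm L r * γm L s) * γm L q) := by rw [hcomm q r s hqr hqs]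
    _ = (γm L p * (γm L r * γm L s)) * γm L q := by rw [← mul_assoc]
    _ = ((γm L r * γm L s) * γm L p) * γm L q := by rw [hcomm p r s hpr hps]
    _ = (γm L r * γm L s) * (γm L p * γm L q) := by rw [mul_assoc]

def gset : Set (Matrix (Fin L → Fin 2) (Fin L → Fin 2) ℂ) :=
  {x | ∃ a b : Fin L × Fin 2, a ≠ b ∧ x = γm L a * γm L b}

def V : Submodule ℝ (Matrix (Fin L → Fin 2) (Fin L → Fin 2) ℂ) :=
  Submodule.span ℝ (gset L)

lemma gamma_mem_V (a b : Fin L × Fin 2) (h : a ≠ b) : γm L a * γm L b ∈ V L :=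
  Submodule.subset_span ⟨a, b, h, rfl⟩

lemma bracket_mem (p q r s : Fin L × Fin 2) (hpq : p ≠ q) (hrs : r ≠ s) :
    ⁅γm L p * γm L q, γm L r * γm L s⁆ ∈ V L := by
  by_cases hqr : q = r
  · subst hqr
    by_cases hps : p = s
    · subst hps
      have : γm L q * γm L p = -(γm L p * γm L q) := gamma_anticomm L q p hrs
      rw [this, lie_neg, lie_self, neg_zero]
      exact zero_mem _
    · rw [br2 L p q s hpq hrs (Ne.symm hps)]
      exact Submodule.smul_mem _ _ (gamma_mem_V L p s hps)
  · by_cases hqs : q = s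
    · subst hqs
      by_cases hpr : p = r
      · subst hpr; rw [lie_self]; exact zero_mem _
      · have : γm L r * γm L q = -(γm L q * γm L r) := gamma_anticomm L r q (Ne.symm hqr)
        rw [this, lie_neg, br2 L p q r hpq hqr (Ne.symm hpr)]
        rw [← neg_smul]
        exact Submodule.smul_mem _ _ (gamma_mem_V L p r hpr)
    · by_cases hpr : p = r
      · subst hpr
        have : γm L p * γm L q = -(γm L q * γm L p) := gamma_anticomm L p q hpq
        rw [this, neg_lie, br2 L q p s (Ne.symm hpq) hrs (Ne.symm hqs)]
        rw [← neg_smul]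
        exact Submodule.smul_mem _ _ (gamma_mem_V L q s hqs)
      · by_cases hps : p = s
        · subst hps
          have h1 : γm L p * γm L q = -(γm L q * γm L p) := gamma_anticomm L p q hpq
          have h2 : γm L r * γm L p = -(γm L p * γm L r) := gamma_anticomm L r p (Ne.symm hpr)
          rw [h1, h2, neg_lie, lie_neg, neg_neg,
            br2 L q p r (Ne.symm hpq) hpr (Ne.symm hqr)]
          exact Submodule.smul_mem _ _ (gamma_mem_V L q r hqr)
        · rw [Ring.lie_def, prod4_disj L p q r s hpr hps hqr hqs, sub_self]
          exact zero_mem _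

lemma lie_mem_V : ∀ x ∈ V L, ∀ y ∈ V L, ⁅x, y⁆ ∈ V L := by
  intro x hx
  induction hx using Submodule.span_induction with
  | mem x hxg =>
    intro y hy
    induction hy using Submodule.span_induction with
    | mem y hyg =>
      obtain ⟨a, b, hab, rfl⟩ := hxg
      obtain ⟨c, d, hcd, rfl⟩ := hyg
      exact bracket_mem L a b c d hab hcd
    | zero => rw [lie_zero]; exact zero_mem _
    | add y z _ _ hy hz => rw [lie_add]; exact add_mem hy hz
    | smul t y _ hy => rw [lie_smul]; exact Submodule.smul_mem _ _ hy
  | zero => intro y hy; rw [zero_lie]; exact zero_mem _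
  | add x z _ _ hx hz => intro y hy; rw [add_lie]; exact add_mem (hx y hy) (hz y hy)
  | smul t x _ hx => intro y hy; rw [smul_lie]; exact Submodule.smul_mem _ _ (hx y hy)

def VLie : LieSubalgebra ℝ (Matrix (Fin L → Fin 2) (Fin L → Fin 2) ℂ) :=
  { V L with
    lie_mem' := fun {x y} hx hy => lie_mem_V L x hx y hy }

lemma gen_Z (j : Fin L) : Complex.I • site L PZ j = γm L (j, 0) * γm L (j, 1) := by
  rw [← pm_three, site_eq_W, ← gamma_mul_same]

lemma letter_one : letter 1 = 2 := rfl
lemma letter_zero : letter 0 = 1 := rfl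

lemma gen_XX (j : ℕ) (hj0 : j < L) (hj : j + 1 < L) :
    Complex.I • (site L PX ⟨j, hj0⟩ * site L PX ⟨j + 1, hj⟩) =
      γm L (⟨j, hj0⟩, 1) * γm L (⟨j + 1, hj⟩, 0) := by
  have h1 : (⟨j, hj0⟩ : Fin L) < ⟨j + 1, hj⟩ := by simp [Fin.lt_def]
  have hne : (⟨j, hj0⟩ : Fin L) ≠ ⟨j + 1, hj⟩ := ne_of_lt h1
  rw [gamma_mul_lt L _ _ h1 1 0, ← pm_one, site_eq_W, site_eq_W, W_mul_one]
  · have e2 : pphase (letter 1) 3 = Complex.I := rfl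
    rw [e2]
    congr 1
    refine congrArg (W L) (funext fun m => ?_)
    have hint : ¬((⟨j, hj0⟩ : Fin L) < m ∧ m < ⟨j + 1, hj⟩) := by
      rintro ⟨h1', h2'⟩
      have a1 : j < m.val := h1'
      have a2 : m.val < j + 1 := h2'
      omega
    by_cases hm1 : m = ⟨j, hj0⟩
    · simp [single, sw, hm1, hne, pmul, letter_one, letter_zero]
    · by_cases hm2 : m = ⟨j + 1, hj⟩
      · simp [single, sw, hm1, hm2, Ne.symm hne, pmul, letter_one, letter_zero]
      · simp [single, sw, hm1, hm2, hint, pmul, letter_one, letter_zero]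
  · intro m
    by_cases hm1 : m = ⟨j, hj0⟩
    · have : m ≠ ⟨j + 1, hj⟩ := by rw [hm1]; exact hne
      simp [single, hm1, this, hne, pphase_zero]
    · simp [single, hm1, zero_pphase]

lemma bas_X (j k : Fin L) (h : j < k) (t : Fin 2) :
    Complex.I • pauliString L PX (pm (letter t)) j k = γm L (j, 1) * γm L (k, t) := by
  rw [← pm_one, pauliString_eq_W L 1 (letter t) j k h, gamma_mul_lt L j k h 1 t]
  rfl

lemma bas_Y (j k : Fin L) (h : j < k) (t : Fin 2) :
    Complex.I • pauliString L PY (pm (letter t)) j k = -(γm L (j, 0) * γm L (k, t)) := by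
  rw [← pm_two, pauliString_eq_W L 2 (letter t) j k h, gamma_mul_lt L j k h 0 t]
  have e1 : pphase (letter 0) 3 = -Complex.I := rfl
  have e2 : pmul (letter 0) 3 = 2 := rfl
  rw [e1, e2, neg_smul, neg_neg]

lemma pm_letter_mem (t : Fin 2) : pm (letter t) ∈ ({PX, PY} : Set (Matrix (Fin 2) (Fin 2) ℂ)) := by
  fin_cases t
  · left; rfl
  · right; rfl

lemma pair_ne (j k : Fin L) (s t : Fin 2) (h : j ≠ k) : (j, s) ≠ (k, t) := by
  simp [Prod.ext_iff]
  intro hh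
  exact absurd hh h

lemma aux_lt_mem_basis (j k : Fin L) (h : j < k) (s t : Fin 2) :
    γm L (j, s) * γm L (k, t) ∈ Submodule.span ℝ (depBasis L) := by
  have hjk : j ≠ k := ne_of_lt h
  by_cases hs : s = 0
  · subst hs
    have := bas_Y L j k h t
    have e : γm L (j, 0) * γm L (k, t) = -(Complex.I • pauliString L PY (pm (letter t)) j k) := by
      rw [this, neg_neg]
    rw [e]
    exact neg_mem (Submodule.subset_span (Or.inr ⟨j, k, PY, pm (letter t), h,
      Or.inr rfl, pm_letter_mem t, rfl⟩))
  · have hs1 : s = 1 := by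
      have := s.isLt
      exact Fin.ext (by omega)
    subst hs1
    rw [← bas_X L j k h t]
    exact Submodule.subset_span (Or.inr ⟨j, k, PX, pm (letter t), h,
      Or.inl rfl, pm_letter_mem t, rfl⟩)

lemma gset_sub_span_basis : gset L ⊆ (Submodule.span ℝ (depBasis L) : Set _) := by
  rintro x ⟨⟨j, s⟩, ⟨k, t⟩, hab, rfl⟩
  rcases lt_trichotomy j k with hjk | hjk | hjk
  · exact aux_lt_mem_basis L j k hjk s t
  · subst hjk
    have hst : s ≠ t := by
      intro hh; exact hab (by rw [hh])
    have hcase : (s = 0 ∧ t = 1) ∨ (s = 1 ∧ t = 0) := by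
      have h1 := s.isLt; have h2 := t.isLt
      have h3 : s.val ≠ t.val := fun hh => hst (Fin.ext hh)
      rcases Nat.lt_or_ge s.val 1 with h4 | h4
      · exact Or.inl ⟨Fin.ext (by omega), Fin.ext (by omega)⟩
      · exact Or.inr ⟨Fin.ext (by omega), Fin.ext (by omega)⟩
    rcases hcase with ⟨rfl, rfl⟩ | ⟨rfl, rfl⟩
    · rw [← gen_Z]
      exact Submodule.subset_span (Or.inl ⟨j, rfl⟩)
    · rw [gamma_anticomm L (j, 1) (j, 0) (by simp)]
      refine neg_mem ?_
      rw [← gen_Z]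
      exact Submodule.subset_span (Or.inl ⟨j, rfl⟩)
  · rw [gamma_anticomm L (j, s) (k, t) hab]
    exact neg_mem (aux_lt_mem_basis L k j hjk t s)

lemma basis_sub_V : depBasis L ⊆ (V L : Set _) := by
  rintro x (⟨j, rfl⟩ | ⟨j, k, A, B, hjk, hA, hB, rfl⟩)
  · rw [gen_Z]
    exact gamma_mem_V L _ _ (by simp)
  · have hBt : ∃ t : Fin 2, B = pm (letter t) := by
      rcases hB with rfl | hB'
      · exact ⟨0, rfl⟩
      · rw [Set.mem_singleton_iff] at hB'
        exact ⟨1, by rw [hB']; rfl⟩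
    obtain ⟨t, rfl⟩ := hBt
    rcases hA with rfl | hA'
    · rw [bas_X L j k hjk t]
      exact gamma_mem_V L _ _ (pair_ne L j k 1 t (ne_of_lt hjk))
    · rw [Set.mem_singleton_iff] at hA'
      subst hA'
      rw [bas_Y L j k hjk t]
      exact neg_mem (gamma_mem_V L _ _ (pair_ne L j k 0 t (ne_of_lt hjk)))

lemma span_basis_eq_V : Submodule.span ℝ (depBasis L) = V L := by
  apply le_antisymm
  · rw [Submodule.span_le]
    exact basis_sub_V L
  · rw [V, Submodule.span_le]
    exact gset_sub_span_basis L

def DG : LieSubalgebra ℝ (Matrix (Fin L → Fin 2) (Fin L → Fin 2) ℂ) :=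
  LieSubalgebra.lieSpan ℝ (Matrix (Fin L → Fin 2) (Fin L → Fin 2) ℂ) (depGenOBC L)

lemma adj_mem (j k : Fin L) (s t : Fin 2)
    (h : 2 * k.val + t.val = 2 * j.val + s.val + 1) :
    γm L (j, s) * γm L (k, t) ∈ DG L := by
  have hsv := s.isLt
  have htv := t.isLt
  by_cases hs : s.val = 0
  · have ht : t = 1 := Fin.ext (by omega)
    have hkj : k = j := Fin.ext (by omega)
    have hs' : s = 0 := Fin.ext hs
    subst ht hs'
    rw [hkj, ← gen_Z]
    exact LieSubalgebra.subset_lieSpan (Or.inl ⟨j, rfl⟩)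
  · have hs' : s = 1 := Fin.ext (by omega)
    have ht' : t = 0 := Fin.ext (by omega)
    have hk : k.val = j.val + 1 := by omega
    have hj1 : j.val + 1 < L := by rw [← hk]; exact k.isLt
    have hk' : k = ⟨j.val + 1, hj1⟩ := Fin.ext hk
    subst hs' ht' hk'
    have hgen := gen_XX L j.val j.isLt hj1
    have hj2 : (⟨j.val, j.isLt⟩ : Fin L) = j := rfl
    rw [hj2] at hgen
    rw [← hgen]
    exact LieSubalgebra.subset_lieSpan (Or.inr ⟨j.val, hj1, rfl⟩)

lemma enc_ne (a b : Fin L × Fin 2)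
    (hab : 2 * a.1.val + a.2.val ≠ 2 * b.1.val + b.2.val) : a ≠ b :=
  fun hh => hab (by rw [hh])

lemma chain_mem : ∀ (d : ℕ) (j k : Fin L) (s t : Fin 2),
    2 * k.val + t.val = 2 * j.val + s.val + d + 1 →
    γm L (j, s) * γm L (k, t) ∈ DG L := by
  intro d
  induction d with
  | zero => intro j k s t h; exact adj_mem L j k s t (by omega)
  | succ d ih =>
    intro j k s t h
    have hk2 := k.isLt
    have ht2 := t.isLt
    have hs2 := s.isLt
    have hnL : 2 * j.val + s.val + d + 1 < 2 * L := by omega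
    have hr1 : (2 * j.val + s.val + d + 1) / 2 < L := by omega
    have hr2 : (2 * j.val + s.val + d + 1) % 2 < 2 := Nat.mod_lt _ (by omega)
    have hrv : 2 * ((2 * j.val + s.val + d + 1) / 2) + (2 * j.val + s.val + d + 1) % 2
        = 2 * j.val + s.val + d + 1 := by omega
    have hpr : (j, s) ≠ ((⟨_, hr1⟩ : Fin L), (⟨_, hr2⟩ : Fin 2)) :=
      enc_ne L _ _ (by simp only []; omega)
    have hrq : ((⟨_, hr1⟩ : Fin L), (⟨_, hr2⟩ : Fin 2)) ≠ (k, t) :=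
      enc_ne L _ _ (by simp only []; omega)
    have hpq : (j, s) ≠ (k, t) := enc_ne L _ _ (by simp only []; omega)
    have hb := br2 L (j, s) ((⟨_, hr1⟩ : Fin L), (⟨_, hr2⟩ : Fin 2)) (k, t) hpr hrq (Ne.symm hpq)
    have heq : γm L (j, s) * γm L (k, t) =
        (1/2 : ℝ) • ⁅γm L (j, s) * γm L ((⟨_, hr1⟩ : Fin L), (⟨_, hr2⟩ : Fin 2)),
          γm L ((⟨_, hr1⟩ : Fin L), (⟨_, hr2⟩ : Fin 2)) * γm L (k, t)⁆ := by
      rw [hb, smul_smul]; norm_num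
    rw [heq]
    exact (DG L).smul_mem _ ((DG L).lie_mem
      (ih j ⟨_, hr1⟩ s ⟨_, hr2⟩ (by simp only []; omega))
      (adj_mem L ⟨_, hr1⟩ k ⟨_, hr2⟩ t (by simp only []; omega)))

lemma gset_sub_DG : gset L ⊆ (DG L : Set _) := by
  rintro x ⟨⟨j, s⟩, ⟨k, t⟩, hab, rfl⟩
  have hsv := s.isLt
  have htv := t.isLt
  rcases Nat.lt_trichotomy (2 * j.val + s.val) (2 * k.val + t.val) with hlt | heq | hgt
  · obtain ⟨d, hd⟩ : ∃ d, 2 * k.val + t.val = 2 * j.val + s.val + d + 1 :=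
      ⟨2 * k.val + t.val - (2 * j.val + s.val) - 1, by omega⟩
    exact chain_mem L d j k s t hd
  · exfalso
    apply hab
    rw [Prod.mk.injEq]
    exact ⟨Fin.ext (by omega), Fin.ext (by omega)⟩
  · rw [gamma_anticomm L (j, s) (k, t) hab]
    refine neg_mem ?_
    obtain ⟨d, hd⟩ : ∃ d, 2 * j.val + s.val = 2 * k.val + t.val + d + 1 :=
      ⟨2 * j.val + s.val - (2 * k.val + t.val) - 1, by omega⟩
    exact chain_mem L d k j t s hd

lemma gen_sub_V : depGenOBC L ⊆ (V L : Set _) := by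
  rintro x (⟨j, rfl⟩ | ⟨j, hj, rfl⟩)
  · rw [gen_Z]
    exact gamma_mem_V L _ _ (by simp)
  · rw [gen_XX L j (by omega) hj]
    refine gamma_mem_V L _ _ ?_
    simp [Prod.ext_iff, Fin.ext_iff]

lemma DG_toSubmodule_eq_V : (DG L).toSubmodule = V L := by
  apply le_antisymm
  · have h1 : DG L ≤ VLie L := (LieSubalgebra.lieSpan_le).mpr (gen_sub_V L)
    intro x hx
    exact h1 hx
  · rw [V, Submodule.span_le]
    intro x hx
    exact gset_sub_DG L hx

def pairform (f : Fin L → Fin 4) (A : Matrix (Fin L → Fin 2) (Fin L → Fin 2) ℂ) : ℂ :=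
  ∑ v : Fin L → Fin 2, (starRingEnd ℂ) (∏ k, coef (f k) (v k)) * A v (fun k => v k + eps (f k))

lemma coef_orth (a b : Fin 4) (h : eps a = eps b) :
    ∑ x : Fin 2, (starRingEnd ℂ) (coef a x) * coef b x = if a = b then 2 else 0 := by
  fin_cases a <;> fin_cases b <;>
    first
    | (exact absurd h (by decide))
    | (norm_num [coef, Fin.sum_univ_two, Complex.conj_I, Fin.ext_iff (n := 4),
        show ((3:Fin 4):ℕ) = 3 from rfl, show ((2:Fin 2):ℕ) = 0 from rfl] <;> ring_nf <;>
        norm_num [Complex.I_sq])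

lemma pairform_W (f g : Fin L → Fin 4) :
    pairform L f (W L g) = if f = g then (2:ℂ)^L else 0 := by
  by_cases he : (fun k => eps (f k)) = (fun k => eps (g k))
  · have hcond : ∀ v : Fin L → Fin 2,
        ((fun k => v k + eps (f k)) = fun k => v k + eps (g k)) := by
      intro v; funext k; rw [congrFun he k]
    have hW : ∀ v, W L g v (fun k => v k + eps (f k)) = ∏ k, coef (g k) (v k) := by
      intro v
      show (if _ then _ else _) = _
      rw [if_pos (hcond v)]
    simp only [pairform, hW]
    have hsplit : ∀ v : Fin L → Fin 2,
        (starRingEnd ℂ) (∏ k, coef (f k) (v k)) * ∏ k, coef (g k) (v k)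
        = ∏ k, ((starRingEnd ℂ) (coef (f k) (v k)) * coef (g k) (v k)) := by
      intro v; rw [map_prod, ← Finset.prod_mul_distrib]
    have key := Finset.prod_univ_sum (fun _ : Fin L => (Finset.univ : Finset (Fin 2)))
      (fun k x => (starRingEnd ℂ) (coef (f k) x) * coef (g k) x)
    rw [Fintype.piFinset_univ] at key
    rw [Finset.sum_congr rfl (fun v _ => hsplit v), ← key]
    have hloc : ∀ k, (∑ x : Fin 2, (starRingEnd ℂ) (coef (f k) x) * coef (g k) x)
        = if f k = g k then 2 else 0 :=
      fun k => coef_orth (f k) (g k) (congrFun he k)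
    rw [Finset.prod_congr rfl (fun k _ => hloc k)]
    by_cases hfg : f = g
    · subst hfg
      simp
    · obtain ⟨k0, hk0⟩ := Function.ne_iff.mp hfg
      rw [if_neg hfg]
      exact Finset.prod_eq_zero (Finset.mem_univ k0) (if_neg hk0)
  · have hfg : f ≠ g := fun hh => he (by rw [hh])
    rw [if_neg hfg]
    refine Finset.sum_eq_zero fun v _ => ?_
    have hz : W L g v (fun k => v k + eps (f k)) = 0 := by
      show (if _ then _ else _) = _
      rw [if_neg]
      intro hh
      apply he
      funext k
      exact add_left_cancel (congrFun hh k)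
    rw [hz, mul_zero]

lemma W_linearIndependent : LinearIndependent ℂ (W L) := by
  rw [Fintype.linearIndependent_iff]
  intro c hc f0
  have expand : pairform L f0 (∑ f, c f • W L f) = ∑ f, c f * pairform L f0 (W L f) := by
    unfold pairform
    simp only [Finset.sum_apply, Matrix.sum_apply, Matrix.smul_apply, smul_eq_mul,
      Finset.mul_sum]
    rw [Finset.sum_comm]
    refine Finset.sum_congr rfl fun f _ => Finset.sum_congr rfl fun v _ => by ring
  have h0 : pairform L f0 (∑ f, c f • W L f) = c f0 * 2^L := by
    rw [expand, Finset.sum_congr rfl (fun f _ => by rw [pairform_W])]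
    simp
  rw [hc] at h0
  have hz : pairform L f0 0 = 0 := by simp [pairform]
  rw [hz] at h0
  have h2 : ((2:ℂ)^L) ≠ 0 := pow_ne_zero _ two_ne_zero
  have := h0.symm
  rcases mul_eq_zero.mp this with h | h
  · exact h
  · exact absurd h h2

lemma mw_pmul_same (j : Fin L) :
    (fun m => pmul (mw L (j, 0) m) (mw L (j, 1) m)) = single L j 3 := by
  funext m
  rcases lt_trichotomy m j with hm | hm | hm
  · simp [mw, single, hm, ne_of_lt hm, pmul_self]
  · subst hm
    norm_num [mw, single, lt_irrefl, letter, pmul]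
    rfl
  · simp [mw, single, not_lt_of_gt hm, Ne.symm (ne_of_lt hm), pmul]

lemma mw_pmul_lt (j k : Fin L) (h : j < k) (s t : Fin 2) :
    (fun m => pmul (mw L (j, s) m) (mw L (k, t) m)) =
      sw L j k (pmul (letter s) 3) (letter t) := by
  funext m
  rcases lt_trichotomy m j with hm | hm | hm
  · have hmk : m < k := lt_trans hm h
    have hk : m ≠ k := ne_of_lt hmk
    simp [mw, sw, hm, hmk, ne_of_lt hm, hk, pmul_self, not_lt_of_gt hm]
  · subst hm
    simp [mw, sw, lt_irrefl, h, ne_of_lt h]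
  · have hjm : ¬(m < j) := not_lt_of_gt hm
    have hmj : m ≠ j := Ne.symm (ne_of_lt hm)
    rcases lt_trichotomy m k with hm2 | hm2 | hm2
    · simp [mw, sw, hjm, hmj, hm2, ne_of_lt hm2, zero_pmul, hm]
    · subst hm2
      simp [mw, sw, lt_irrefl, hjm, hmj, zero_pmul]
    · have h2 : ¬(m < k) := not_lt_of_gt hm2
      have h3 : m ≠ k := Ne.symm (ne_of_lt hm2)
      simp [mw, sw, hjm, hmj, h2, h3, zero_pmul, hm, hm2]

lemma pl_ne_zero : ∀ s : Fin 2, pmul (letter s) 3 ≠ 0 := by decide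
lemma pl_ne_three : ∀ s : Fin 2, pmul (letter s) 3 ≠ 3 := by decide
lemma three_ne_zero' : (3 : Fin 4) ≠ 0 := by decide
lemma pl_inj : ∀ s s' : Fin 2, pmul (letter s) 3 = pmul (letter s') 3 → s = s' := by decide

def JJ := {x : Fin (2*L) × Fin (2*L) // x.1 < x.2}

instance : Fintype (JJ L) := Subtype.fintype _

def decL (n : Fin (2*L)) : Fin L × Fin 2 :=
  (⟨n.val / 2, by have := n.isLt; omega⟩, ⟨n.val % 2, Nat.mod_lt _ (by omega)⟩)

def wordJ (x : JJ L) : Fin L → Fin 4 :=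
  fun m => pmul (mw L (decL L x.1.1) m) (mw L (decL L x.1.2) m)

def FF (x : JJ L) : Matrix (Fin L → Fin 2) (Fin L → Fin 2) ℂ :=
  γm L (decL L x.1.1) * γm L (decL L x.1.2)

lemma dval (n : Fin (2*L)) (j : Fin L) (s : Fin 2) (h : decL L n = (j, s)) :
    n.val = 2 * j.val + s.val := by
  have h1 := congrArg (fun p : Fin L × Fin 2 => (p.1.val, p.2.val)) h
  simp [decL] at h1
  omega

lemma word_shape (x : JJ L) :
    (∃ j : Fin L, decL L x.1.1 = (j, 0) ∧ decL L x.1.2 = (j, 1) ∧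
       wordJ L x = single L j 3) ∨
    (∃ (j k : Fin L) (s t : Fin 2), j < k ∧ decL L x.1.1 = (j, s) ∧ decL L x.1.2 = (k, t) ∧
       wordJ L x = sw L j k (pmul (letter s) 3) (letter t)) := by
  obtain ⟨⟨n1, n2⟩, hx⟩ := x
  have h1 : n1.val < n2.val := hx
  have h2 := n2.isLt
  by_cases hjj : n1.val / 2 = n2.val / 2
  · left
    have hs : n1.val % 2 = 0 := by omega
    have ht : n2.val % 2 = 1 := by omega
    have e1 : decL L n1 = (⟨n1.val / 2, by omega⟩, 0) := by
      rw [decL, Prod.mk.injEq]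
      exact ⟨rfl, Fin.ext hs⟩
    have e2 : decL L n2 = (⟨n1.val / 2, by omega⟩, 1) := by
      rw [decL, Prod.mk.injEq]
      exact ⟨Fin.ext hjj.symm, Fin.ext ht⟩
    refine ⟨⟨n1.val / 2, by omega⟩, e1, e2, ?_⟩
    show (fun m => pmul (mw L (decL L n1) m) (mw L (decL L n2) m)) = _
    rw [e1, e2, mw_pmul_same]
  · right
    have hjk : n1.val / 2 < n2.val / 2 := by omega
    refine ⟨⟨n1.val / 2, by omega⟩, ⟨n2.val / 2, by omega⟩,
      ⟨n1.val % 2, Nat.mod_lt _ (by omega)⟩, ⟨n2.val % 2, Nat.mod_lt _ (by omega)⟩,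
      Fin.mk_lt_mk.mpr hjk, rfl, rfl, ?_⟩
    show (fun m => pmul (mw L (decL L n1) m) (mw L (decL L n2) m)) = _
    exact mw_pmul_lt L _ _ (Fin.mk_lt_mk.mpr hjk) _ _

lemma wordJ_inj : Function.Injective (wordJ L) := by
  intro x y hxy
  have hval : x.1.1.val = y.1.1.val → x.1.2.val = y.1.2.val → x = y := by
    intro h1 h2
    exact Subtype.ext (Prod.ext (Fin.ext h1) (Fin.ext h2))
  rcases word_shape L x with ⟨j, e1, e2, ew⟩ | ⟨j, k, s, t, hjk, e1, e2, ew⟩ <;>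
    rcases word_shape L y with ⟨j', f1, f2, fw⟩ | ⟨j', k', s', t', hjk', f1, f2, fw⟩
  · -- same, same
    have h := ew.symm.trans (hxy.trans fw)
    have hj : j = j' := by
      by_contra hne
      have hc := congrFun h j
      simp [single, hne] at hc
    subst hj
    exact hval (by rw [dval L _ _ _ e1, dval L _ _ _ f1])
      (by rw [dval L _ _ _ e2, dval L _ _ _ f2])
  · -- same, cross : contradiction
    exfalso
    have h := ew.symm.trans (hxy.trans fw)
    have hc := congrFun h j'
    by_cases hjj : j' = j
    · simp [single, sw, hjj] at hc
      exact pl_ne_three s' hc.symm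
    · simp [single, sw, hjj] at hc
      exact pl_ne_zero s' hc.symm
  · -- cross, same : contradiction
    exfalso
    have h := fw.symm.trans (hxy.symm.trans ew)
    have hc := congrFun h j
    by_cases hjj : j = j'
    · simp [single, sw, hjj] at hc
      exact pl_ne_three s hc.symm
    · simp [single, sw, hjj] at hc
      exact pl_ne_zero s hc.symm
  · -- cross, cross
    have h := ew.symm.trans (hxy.trans fw)
    have hj : j = j' := by
      rcases lt_trichotomy j j' with hlt | he | hgt
      · exfalso
        have hc := congrFun h j
        have hl : sw L j k (pmul (letter s) 3) (letter t) j = pmul (letter s) 3 := by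
          simp [sw]
        have hr : sw L j' k' (pmul (letter s') 3) (letter t') j = 0 := by
          have ha : j ≠ j' := ne_of_lt hlt
          have hb : j ≠ k' := ne_of_lt (lt_trans hlt hjk')
          have hcc : ¬(j' < j ∧ j < k') := fun hh => absurd hh.1 (not_lt_of_gt hlt)
          simp [sw, ha, hb, hcc]
        rw [hl, hr] at hc
        exact pl_ne_zero s hc
      · exact he
      · exfalso
        have hc := congrFun h j'
        have hl : sw L j k (pmul (letter s) 3) (letter t) j' = 0 := by
          have ha : j' ≠ j := ne_of_lt hgt
          have hb : j' ≠ k := ne_of_lt (lt_trans hgt hjk)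
          have hcc : ¬(j < j' ∧ j' < k) := fun hh => absurd hh.1 (not_lt_of_gt hgt)
          simp [sw, ha, hb, hcc]
        have hr : sw L j' k' (pmul (letter s') 3) (letter t') j' = pmul (letter s') 3 := by
          simp [sw]
        rw [hl, hr] at hc
        exact pl_ne_zero s' hc.symm
    subst hj
    have hs : s = s' := by
      have hc := congrFun h j
      simp [sw] at hc
      exact pl_inj s s' hc
    subst hs
    have hk : k = k' := by
      rcases lt_trichotomy k k' with hlt | he | hgt
      · exfalso
        have hc := congrFun h k
        have hl : sw L j k (pmul (letter s) 3) (letter t) k = letter t := by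
          simp [sw, Ne.symm (ne_of_lt hjk)]
        have hr : sw L j k' (pmul (letter s) 3) (letter t') k = 3 := by
          have ha : k ≠ j := Ne.symm (ne_of_lt hjk)
          have hb : k ≠ k' := ne_of_lt hlt
          simp [sw, ha, hb, hjk, hlt]
        rw [hl, hr] at hc
        exact letter_ne_three t hc
      · exact he
      · exfalso
        have hc := congrFun h k'
        have hl : sw L j k (pmul (letter s) 3) (letter t) k' = 3 := by
          have ha : k' ≠ j := Ne.symm (ne_of_lt hjk')
          have hb : k' ≠ k := ne_of_lt hgt
          simp [sw, ha, hb, hjk', hgt]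
        have hr : sw L j k' (pmul (letter s) 3) (letter t') k' = letter t' := by
          simp [sw, Ne.symm (ne_of_lt hjk')]
        rw [hl, hr] at hc
        exact letter_ne_three t' hc.symm
    subst hk
    have ht : t = t' := by
      have hc := congrFun h k
      simp [sw, Ne.symm (ne_of_lt hjk)] at hc
      exact (letter_inj t t').mp hc
    subst ht
    exact hval (by rw [dval L _ _ _ e1, dval L _ _ _ f1])
      (by rw [dval L _ _ _ e2, dval L _ _ _ f2])

lemma FF_eq (x : JJ L) : FF L x =
    (∏ m, pphase (mw L (decL L x.1.1) m) (mw L (decL L x.1.2) m)) • W L (wordJ L x) :=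
  W_mul L _ _

lemma FF_li : LinearIndependent ℝ (FF L) := by
  have h1 : LinearIndependent ℂ (fun x : JJ L => W L (wordJ L x)) :=
    (W_linearIndependent L).comp (wordJ L) (wordJ_inj L)
  have h2 := h1.units_smul (fun x : JJ L =>
    Units.mk0 (∏ m, pphase (mw L (decL L x.1.1) m) (mw L (decL L x.1.2) m))
      (Finset.prod_ne_zero_iff.mpr (fun m _ => pphase_ne_zero _ _)))
  have h3 : LinearIndependent ℂ (FF L) := by
    have e : FF L = (fun x : JJ L =>
        Units.mk0 (∏ m, pphase (mw L (decL L x.1.1) m) (mw L (decL L x.1.2) m))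
          (Finset.prod_ne_zero_iff.mpr (fun m _ => pphase_ne_zero _ _))) •
        (fun x : JJ L => W L (wordJ L x)) := funext fun x => by
      rw [FF_eq]; rfl
    rw [e]
    exact h2
  refine h3.restrict_scalars ?_
  intro a b hab
  have : (a : ℂ) = (b : ℂ) := by simpa [Complex.real_smul] using hab
  exact_mod_cast this

lemma decL_enc (a : Fin L × Fin 2) (h : 2 * a.1.val + a.2.val < 2 * L) :
    decL L ⟨2 * a.1.val + a.2.val, h⟩ = a := by
  obtain ⟨a1, a2⟩ := a
  have := a2.isLt
  rw [decL, Prod.mk.injEq]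
  constructor <;> (apply Fin.ext; simp; omega)

lemma V_eq_span_FF : V L = Submodule.span ℝ (Set.range (FF L)) := by
  apply le_antisymm
  · rw [V, Submodule.span_le]
    rintro x ⟨a, b, hab, rfl⟩
    have ha2 := a.2.isLt
    have ha1 := a.1.isLt
    have hb2 := b.2.isLt
    have hb1 := b.1.isLt
    have hna : 2 * a.1.val + a.2.val < 2 * L := by omega
    have hnb : 2 * b.1.val + b.2.val < 2 * L := by omega
    rcases Nat.lt_trichotomy (2 * a.1.val + a.2.val) (2 * b.1.val + b.2.val) with h | h | h
    · refine Submodule.subset_span ⟨⟨(⟨_, hna⟩, ⟨_, hnb⟩), Fin.mk_lt_mk.mpr h⟩, ?_⟩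
      show γm L (decL L _) * γm L (decL L _) = _
      rw [decL_enc L a hna, decL_enc L b hnb]
    · exfalso
      apply hab
      obtain ⟨a1, a2⟩ := a
      obtain ⟨b1, b2⟩ := b
      rw [Prod.mk.injEq]
      simp only at h
      exact ⟨Fin.ext (by omega), Fin.ext (by omega)⟩
    · rw [gamma_anticomm L a b hab]
      refine neg_mem (Submodule.subset_span ⟨⟨(⟨_, hnb⟩, ⟨_, hna⟩), Fin.mk_lt_mk.mpr h⟩, ?_⟩)
      show γm L (decL L _) * γm L (decL L _) = _
      rw [decL_enc L b hnb, decL_enc L a hna]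
  · rw [Submodule.span_le]
    rintro x ⟨y, rfl⟩
    refine gamma_mem_V L _ _ ?_
    intro hh
    have h1 := congrArg (fun p : Fin L × Fin 2 => (p.1.val, p.2.val)) hh
    simp [decL] at h1
    have hlt : y.1.1.val < y.1.2.val := y.2
    omega

lemma card_JJ : Fintype.card (JJ L) = L * (2 * L - 1) := by
  have e : JJ L ≃ Σ b : Fin (2*L), Fin b.val :=
    { toFun := fun x => ⟨x.1.2, ⟨x.1.1.val, x.2⟩⟩
      invFun := fun s => ⟨(⟨s.2.val, lt_trans s.2.isLt s.1.isLt⟩, s.1), s.2.isLt⟩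
      left_inv := fun x => rfl
      right_inv := fun s => rfl }
  rw [Fintype.card_congr e, Fintype.card_sigma]
  simp only [Fintype.card_fin]
  rw [Fin.sum_univ_eq_sum_range (fun i => i) (2*L)]
  have h2 := Finset.sum_range_id_mul_two (2*L)
  rw [mul_assoc] at h2
  omega

lemma finrank_V : Module.finrank ℝ (V L) = L * (2 * L - 1) := by
  rw [V_eq_span_FF, finrank_span_eq_card (FF_li L), card_JJ]

end DepOBC

theorem dep_obc_lie_algebra (L : ℕ) (hL : 2 ≤ L) :
    (LieSubalgebra.lieSpan ℝ (Matrix (Fin L → Fin 2) (Fin L → Fin 2) ℂ)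
        (depGenOBC L)).toSubmodule = Submodule.span ℝ (depBasis L) ∧
    Module.finrank ℝ
        ↥(LieSubalgebra.lieSpan ℝ (Matrix (Fin L → Fin 2) (Fin L → Fin 2) ℂ) (depGenOBC L)) =
      L * (2 * L - 1) := by
  constructor
  · exact (DepOBC.DG_toSubmodule_eq_V L).trans (DepOBC.span_basis_eq_V L).symm
  · have h1 : Module.finrank ℝ
        ↥(LieSubalgebra.lieSpan ℝ (Matrix (Fin L → Fin 2) (Fin L → Fin 2) ℂ) (depGenOBC L)) =
        Module.finrank ℝ ↥((DepOBC.DG L).toSubmodule) := rfl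
    rw [h1, DepOBC.DG_toSubmodule_eq_V L]
    exact DepOBC.finrank_V L
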